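/- Let J = blkdiag(I_n, -I_m) and K a real (n+m)×(n+m) matrix that is J-symmetric, i.e., (JK)ᵀ = JK. Suppose there exists a nonzero real scalar η such that H = ηJK is symmetric positive definite. Then K is diagonalizable with purely real eigenvalues, and there is an invertible X with K = X Λ X⁻¹ and ‖X‖·‖X⁻¹‖ ≤ √(‖H‖·‖H⁻¹‖). -/

import Mathlib

open scoped Matrix Matrix.Norms.L2Operator MatrixOrder

set_option maxHeartbeats 1600000 in
/-- Let `J = blkdiag(I_n, -I_m)` and `K` a real `(n+m)×(n+m)` matrix that is
`J`-symmetric, i.e. `(J*K)ᵀ = J*K`. Suppose there is a nonzero real `η` such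
that `H = η • (J*K)` is positive definite. Then `K` is diagonalizable with
purely real eigenvalues via an invertible `X` with
`‖X‖·‖X⁻¹‖ ≤ √(‖H‖·‖H⁻¹‖)` (spectral norms). -/
theorem Jsymmetric_posdef_real_diagonalizable (n m : ℕ)
    (K : Matrix (Fin n ⊕ Fin m) (Fin n ⊕ Fin m) ℝ)
    (J : Matrix (Fin n ⊕ Fin m) (Fin n ⊕ Fin m) ℝ)
    (hJ : J = Matrix.fromBlocks 1 0 0 (-1))
    (hsym : (J * K)ᵀ = J * K)
    (η : ℝ) (hη : η ≠ 0)
    (H : Matrix (Fin n ⊕ Fin m) (Fin n ⊕ Fin m) ℝ)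
    (hH : H = η • (J * K)) (hpd : H.PosDef) :
    ∃ (X : Matrix (Fin n ⊕ Fin m) (Fin n ⊕ Fin m) ℝ)
      (Λ : (Fin n ⊕ Fin m) → ℝ),
      IsUnit X.det ∧ K = X * Matrix.diagonal Λ * X⁻¹ ∧
      ‖X‖ * ‖X⁻¹‖ ≤ Real.sqrt (‖H‖ * ‖H⁻¹‖) := by
  classical
  have hJJ : J * J = 1 := by
    subst hJ
    rw [Matrix.fromBlocks_multiply]
    simp [← Matrix.fromBlocks_one]
  have hJT : Jᵀ = J := by
    subst hJ
    simp [Matrix.fromBlocks_transpose]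
  -- K in terms of H
  have hK : K = η⁻¹ • (J * H) := by
    rw [hH, Matrix.mul_smul, ← mul_assoc, hJJ, one_mul, smul_smul,
      inv_mul_cancel₀ hη, one_smul]
  -- the square root W of H
  set W := CFC.sqrt H with hW
  have hWW : W * W = H := CFC.sqrt_mul_sqrt_self H hpd.posSemidef.nonneg
  have hWherm : Wᴴ = W := (Matrix.nonneg_iff_posSemidef.mp (CFC.sqrt_nonneg H)).isHermitian
  have hWdet : IsUnit W.det := by
    rw [isUnit_iff_ne_zero]
    intro h0
    have : H.det = 0 := by rw [← hWW, Matrix.det_mul, h0, mul_zero]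
    exact (ne_of_gt hpd.det_pos) this
  have hWiW : W⁻¹ * W = 1 := Matrix.nonsing_inv_mul W hWdet
  have hWWi : W * W⁻¹ = 1 := Matrix.mul_nonsing_inv W hWdet
  -- the symmetrized matrix S
  set S := W * K * W⁻¹ with hSdef
  have hcore : W * (J * H) * W⁻¹ = W * J * W := by
    calc W * (J * H) * W⁻¹ = W * J * (W * (W * W⁻¹)) := by
          rw [← hWW]; simp only [mul_assoc]
      _ = W * J * W := by rw [hWWi, mul_one]
  have hS_eq : S = η⁻¹ • (W * J * W) := by
    rw [hSdef, hK, Matrix.mul_smul, Matrix.smul_mul, hcore]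
  have hSherm : S.IsHermitian := by
    rw [Matrix.IsHermitian, hS_eq, Matrix.conjTranspose_smul, Matrix.conjTranspose_mul,
      Matrix.conjTranspose_mul, hWherm]
    have hJH : Jᴴ = J := by
      rw [Matrix.conjTranspose_eq_transpose_of_trivial, hJT]
    rw [hJH, star_trivial, mul_assoc]
  -- spectral decomposition of S
  set V : Matrix (Fin n ⊕ Fin m) (Fin n ⊕ Fin m) ℝ := (hSherm.eigenvectorUnitary : Matrix (Fin n ⊕ Fin m) (Fin n ⊕ Fin m) ℝ) with hV
  have hVmem := (hSherm.eigenvectorUnitary).2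
  have hVVs : V * star V = 1 := Matrix.mem_unitaryGroup_iff.mp hVmem
  have hVsV : star V * V = 1 := Matrix.mem_unitaryGroup_iff'.mp hVmem
  obtain ⟨Λ, hspec⟩ : ∃ Λ, S = V * Matrix.diagonal Λ * star V := by
    refine ⟨hSherm.eigenvalues, ?_⟩
    have := hSherm.spectral_theorem
    rwa [RCLike.ofReal_real_eq_id, Function.id_comp] at this
  have hXinv : (W⁻¹ * V)⁻¹ = star V * W := by
    apply Matrix.inv_eq_right_inv
    calc W⁻¹ * V * (star V * W) = W⁻¹ * (V * star V) * W := by simp only [mul_assoc]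
      _ = 1 := by rw [hVVs, mul_one, hWiW]
  refine ⟨W⁻¹ * V, Λ, ?_, ?_, ?_⟩
  · exact Matrix.isUnit_det_of_right_inverse (B := star V * W) (by
      calc W⁻¹ * V * (star V * W) = W⁻¹ * (V * star V) * W := by simp only [mul_assoc]
        _ = 1 := by rw [hVVs, mul_one, hWiW])
  · rw [hXinv]
    have hKS : K = W⁻¹ * S * W := by
      calc K = (W⁻¹ * W) * K * (W⁻¹ * W) := by rw [hWiW, one_mul, mul_one]
        _ = W⁻¹ * (W * K * W⁻¹) * W := by simp only [mul_assoc]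
        _ = W⁻¹ * S * W := by rw [← hSdef]
    rw [hKS, hspec]
    simp only [mul_assoc]
  · have hone : ‖(1 : Matrix (Fin n ⊕ Fin m) (Fin n ⊕ Fin m) ℝ)‖ ≤ 1 := by
      have h := Matrix.l2_opNorm_conjTranspose_mul_self
        (1 : Matrix (Fin n ⊕ Fin m) (Fin n ⊕ Fin m) ℝ)
      rw [Matrix.conjTranspose_one, mul_one] at h
      nlinarith [norm_nonneg (1 : Matrix (Fin n ⊕ Fin m) (Fin n ⊕ Fin m) ℝ)]
    have hVnorm : ‖V‖ ≤ 1 := by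
      have h := Matrix.l2_opNorm_conjTranspose_mul_self V
      rw [← Matrix.star_eq_conjTranspose, hVsV] at h
      nlinarith [norm_nonneg V]
    have hVsnorm : ‖star V‖ ≤ 1 := by
      rw [Matrix.star_eq_conjTranspose, Matrix.l2_opNorm_conjTranspose]
      exact hVnorm
    have hnW : ‖W‖ * ‖W‖ = ‖H‖ := by
      rw [← Matrix.l2_opNorm_conjTranspose_mul_self W, hWherm, hWW]
    have hWiherm : (W⁻¹)ᴴ = W⁻¹ := by
      rw [Matrix.conjTranspose_nonsing_inv, hWherm]
    have hnWi : ‖W⁻¹‖ * ‖W⁻¹‖ = ‖H⁻¹‖ := by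
      rw [← Matrix.l2_opNorm_conjTranspose_mul_self W⁻¹, hWiherm, ← Matrix.mul_inv_rev, hWW]
    have hX1 : ‖W⁻¹ * V‖ ≤ ‖W⁻¹‖ := by
      calc ‖W⁻¹ * V‖ ≤ ‖W⁻¹‖ * ‖V‖ := Matrix.l2_opNorm_mul _ _
        _ ≤ ‖W⁻¹‖ * 1 := mul_le_mul_of_nonneg_left hVnorm (norm_nonneg _)
        _ = ‖W⁻¹‖ := mul_one _
    have hX2 : ‖(W⁻¹ * V)⁻¹‖ ≤ ‖W‖ := by
      rw [hXinv]
      calc ‖star V * W‖ ≤ ‖star V‖ * ‖W‖ := Matrix.l2_opNorm_mul _ _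
        _ ≤ 1 * ‖W‖ := mul_le_mul_of_nonneg_right hVsnorm (norm_nonneg _)
        _ = ‖W‖ := one_mul _
    have hsqrt : Real.sqrt (‖H‖ * ‖H⁻¹‖) = ‖W‖ * ‖W⁻¹‖ := by
      rw [← hnW, ← hnWi,
        show ‖W‖ * ‖W‖ * (‖W⁻¹‖ * ‖W⁻¹‖) = (‖W‖ * ‖W⁻¹‖) ^ 2 by ring,
        Real.sqrt_sq (by positivity)]
    rw [hsqrt]
    calc ‖W⁻¹ * V‖ * ‖(W⁻¹ * V)⁻¹‖ ≤ ‖W⁻¹‖ * ‖W‖ :=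
          mul_le_mul hX1 hX2 (norm_nonneg _) (norm_nonneg _)
      _ = ‖W‖ * ‖W⁻¹‖ := mul_comm _ _
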